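/- If γ is a nonzero formal ℕ-combination of intervals in ℝ with independence number α(γ) > 1 that is incompressible in ℐ(s), then s ≤ 2α(γ) − 1; moreover if s ≥ 3 then the set 𝒮(s) = {[i,i+1] : 0 ≤ i ≤ s} ∪ {[1,3],[s−2,s]} is contained in the support of γ. -/
import Mathlib


def AdjN (p q : ℕ × ℕ) : Prop :=
  ∃ x : ℝ, Set.Icc (p.1 : ℝ) p.2 ∩ Set.Icc (q.1 : ℝ) q.2 = {x}

def memIs (s : ℕ) (p : ℕ × ℕ) : Prop :=
  p = (0, 1) ∨ p = (s, s + 1) ∨ (1 ≤ p.1 ∧ p.1 < p.2 ∧ p.2 ≤ s)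

/-- 𝒮(s) = {[i,i+1] : 0 ≤ i ≤ s} ∪ {[1,3],[s-2,s]}. -/
def memSs (s : ℕ) (p : ℕ × ℕ) : Prop :=
  (∃ i ≤ s, p = (i, i + 1)) ∨ p = (1, 3) ∨ p = (s - 2, s)

lemma adjN_touch {a b c d : ℕ} (h1 : a ≤ b) (h2 : b = c) (h3 : c ≤ d) :
    AdjN (a, b) (c, d) := by
  refine ⟨(b : ℝ), ?_⟩
  subst h2
  show Set.Icc (a:ℝ) b ∩ Set.Icc (b:ℝ) d = {(b:ℝ)}
  rw [Set.Icc_inter_Icc, max_eq_right (by exact_mod_cast h1),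
    min_eq_left (by exact_mod_cast h3), Set.Icc_self]

lemma adjN_symm {p q : ℕ × ℕ} (h : AdjN p q) : AdjN q p := by
  obtain ⟨x, hx⟩ := h; exact ⟨x, by rwa [Set.inter_comm]⟩

lemma memIs_elim {s a b : ℕ} (h : memIs s (a, b)) :
    (a = 0 ∧ b = 1) ∨ (a = s ∧ b = s + 1) ∨ (1 ≤ a ∧ a < b ∧ b ≤ s) := by
  simpa [memIs, Prod.ext_iff] using h

lemma adjN_cases {a b c d : ℕ} (hab : a < b) (hcd : c < d) (h : AdjN (a, b) (c, d)) :
    b = c ∨ d = a := by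
  obtain ⟨x, hx⟩ := h
  rw [show ((a,b) : ℕ × ℕ).1 = a from rfl] at hx
  rw [Set.Icc_inter_Icc, Set.Icc_eq_singleton_iff] at hx
  obtain ⟨h1, h2⟩ := hx
  have h3 : max (a:ℝ) c = min (b:ℝ) d := h1.trans h2.symm
  rw [← Nat.cast_max, ← Nat.cast_min] at h3
  have h4 : max a c = min b d := Nat.cast_inj.mp h3
  omega

lemma mem_lt {s : ℕ} {p : ℕ × ℕ} (h : memIs s p) : p.1 < p.2 := by
  obtain ⟨a, b⟩ := p
  rcases memIs_elim h with h | h | h <;> simp <;> omega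

lemma not_adjN_of_lt {a b c d : ℕ} (h : b < c) : ¬ AdjN (a, b) (c, d) := by
  rintro ⟨x, hx⟩
  have hx1 : x ∈ Set.Icc (a:ℝ) b ∩ Set.Icc (c:ℝ) d := by rw [hx]; rfl
  obtain ⟨⟨-, h1⟩, h2, -⟩ := hx1
  have : (b:ℝ) < c := by exact_mod_cast h
  linarith

lemma not_adjN_self {a b : ℕ} (h : a < b) : ¬ AdjN (a, b) (a, b) := by
  rintro ⟨x, hx⟩
  rw [Set.inter_self, Set.Icc_eq_singleton_iff] at hx
  have : (a:ℝ) = b := hx.1.trans hx.2.symm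
  exact absurd (Nat.cast_inj.mp this) (by omega)

lemma not_fst_snd {q : ℕ × ℕ} {γ : Multiset (ℕ × ℕ)} {a b : ℕ}
    (h : (a, b) ∉ γ) (hq : q ∈ γ) : ¬ (q.1 = a ∧ q.2 = b) := by
  rintro ⟨rfl, rfl⟩
  exact h (by simpa using hq)

set_option maxHeartbeats 2000000 in
/-- An incompressible nonzero combination γ ∈ ℕℐ(s) with α(γ) > 1 satisfies
s ≤ 2α(γ) − 1 (i.e. some independent sub-multiset t has 2|t| ≥ s+1), and for s ≥ 3
the set 𝒮(s) is contained in the support of γ. -/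
theorem stmt_13 (s : ℕ) (γ : Multiset (ℕ × ℕ)) (hne : γ ≠ 0)
    (hγ : ∀ p ∈ γ, memIs s p)
    (halpha : ∃ t ≤ γ, (∀ p ∈ t, ∀ q ∈ t, ¬ AdjN p q) ∧ 2 ≤ Multiset.card t)
    (hinc : ∀ s' < s, ¬ ∃ f : ℕ × ℕ → ℕ × ℕ,
      (∀ p ∈ γ, memIs s' (f p)) ∧
      (∀ p ∈ γ, ∀ q ∈ γ, AdjN p q → AdjN (f p) (f q))) :
    (∃ t ≤ γ, (∀ p ∈ t, ∀ q ∈ t, ¬ AdjN p q) ∧ s + 1 ≤ 2 * Multiset.card t) ∧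
    (3 ≤ s → ∀ p, memSs s p → p ∈ γ) := by
  have key : 3 ≤ s → ∀ p, memSs s p → p ∈ γ := by
    intro hs3 p hp
    by_contra hmem
    have compress : ∀ f : ℕ × ℕ → ℕ × ℕ,
        (∀ q ∈ γ, memIs (s - 1) (f q)) →
        (∀ p' ∈ γ, ∀ q ∈ γ, p'.2 = q.1 → AdjN (f p') (f q)) → False := by
      intro f h1 h2
      refine hinc (s - 1) (by omega) ⟨f, h1, fun p' hp' q hq hadj => ?_⟩
      rcases adjN_cases (mem_lt (hγ p' hp')) (mem_lt (hγ q hq)) hadj with h | h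
      · exact h2 p' hp' q hq h
      · exact adjN_symm (h2 q hq p' hp' h)
    rcases hp with ⟨i, hi, rfl⟩ | rfl | rfl
    · by_cases hi0 : i = 0
      · -- missing (0,1)
        subst hi0
        refine compress (fun q => if q.1 = 1 ∧ q.2 = 2 then (0, 1)
          else if q.1 = 1 then (1, q.2 - 1) else (q.1 - 1, q.2 - 1)) ?_ ?_
        · intro q hq
          obtain ⟨a, b⟩ := q
          have hm := memIs_elim (hγ _ hq)
          have hne1 := not_fst_snd hmem hq
          simp only at hne1
          dsimp only
          split_ifs <;> simp only [memIs, Prod.mk.injEq, true_and, and_true, true_or, or_true] <;> omega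
        · intro p hp q hq hpq
          obtain ⟨a, b⟩ := p; obtain ⟨c, d⟩ := q
          have hmp := memIs_elim (hγ _ hp)
          have hmq := memIs_elim (hγ _ hq)
          have hnp := not_fst_snd hmem hp
          have hnq := not_fst_snd hmem hq
          simp only at hnp hnq hpq
          dsimp only
          split_ifs <;>
            first
              | (exfalso; omega)
              | (exact adjN_touch (by omega) (by omega) (by omega))
              | (exact adjN_symm (adjN_touch (by omega) (by omega) (by omega)))
      · by_cases his : i = s
        · -- missing (s, s+1)
          rw [his] at hmem
          refine compress (fun q => if q.1 = s - 1 ∧ q.2 = s then (s - 1, s)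
            else if q.2 = s then (q.1, s - 1) else q) ?_ ?_
          · intro q hq
            obtain ⟨a, b⟩ := q
            have hm := memIs_elim (hγ _ hq)
            have hne1 := not_fst_snd hmem hq
            simp only at hne1
            dsimp only
            split_ifs <;> simp only [memIs, Prod.mk.injEq, true_and, and_true, true_or, or_true] <;> omega
          · intro p hp q hq hpq
            obtain ⟨a, b⟩ := p; obtain ⟨c, d⟩ := q
            have hmp := memIs_elim (hγ _ hp)
            have hmq := memIs_elim (hγ _ hq)
            have hnp := not_fst_snd hmem hp
            have hnq := not_fst_snd hmem hq
            simp only at hnp hnq hpq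
            dsimp only
            split_ifs <;>
              first
                | (exfalso; omega)
                | (exact adjN_touch (by omega) (by omega) (by omega))
                | (exact adjN_symm (adjN_touch (by omega) (by omega) (by omega)))
        · -- missing (i, i+1), 1 <= i <= s-1 : collapse map
          refine compress (fun q => (if q.1 ≤ i then q.1 else q.1 - 1,
            if q.2 ≤ i then q.2 else q.2 - 1)) ?_ ?_
          · intro q hq
            obtain ⟨a, b⟩ := q
            have hm := memIs_elim (hγ _ hq)
            have hne1 := not_fst_snd hmem hq
            simp only at hne1
            dsimp only
            split_ifs <;> simp only [memIs, Prod.mk.injEq, true_and, and_true, true_or, or_true] <;> omega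
          · intro p hp q hq hpq
            obtain ⟨a, b⟩ := p; obtain ⟨c, d⟩ := q
            have hmp := memIs_elim (hγ _ hp)
            have hmq := memIs_elim (hγ _ hq)
            simp only at hpq
            dsimp only
            split_ifs <;>
              first
                | (exfalso; omega)
                | (exact adjN_touch (by omega) (by omega) (by omega))
                | (exact adjN_symm (adjN_touch (by omega) (by omega) (by omega)))
    · -- missing (1,3)
      refine compress (fun q => if q.1 = 0 then (1, 2)
        else if q.1 = 1 ∧ q.2 = 2 then (0, 1)
        else if q.1 = 1 then (2, q.2 - 1) else (q.1 - 1, q.2 - 1)) ?_ ?_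
      · intro q hq
        obtain ⟨a, b⟩ := q
        have hm := memIs_elim (hγ _ hq)
        have hne1 := not_fst_snd hmem hq
        simp only at hne1
        dsimp only
        split_ifs <;> simp only [memIs, Prod.mk.injEq, true_and, and_true, true_or, or_true] <;> omega
      · intro p hp q hq hpq
        obtain ⟨a, b⟩ := p; obtain ⟨c, d⟩ := q
        have hmp := memIs_elim (hγ _ hp)
        have hmq := memIs_elim (hγ _ hq)
        have hnp := not_fst_snd hmem hp
        have hnq := not_fst_snd hmem hq
        simp only at hnp hnq hpq
        dsimp only
        split_ifs <;>
          first
            | (exfalso; omega)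
            | (exact adjN_touch (by omega) (by omega) (by omega))
            | (exact adjN_symm (adjN_touch (by omega) (by omega) (by omega)))
    · -- missing (s-2, s)
      refine compress (fun q => if q.1 = s then (s - 2, s - 1)
        else if q.1 = s - 1 ∧ q.2 = s then (s - 1, s)
        else if q.2 = s then (q.1, s - 2) else q) ?_ ?_
      · intro q hq
        obtain ⟨a, b⟩ := q
        have hm := memIs_elim (hγ _ hq)
        have hne1 := not_fst_snd hmem hq
        simp only at hne1
        dsimp only
        split_ifs <;> simp only [memIs, Prod.mk.injEq, true_and, and_true, true_or, or_true] <;> omega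
      · intro p hp q hq hpq
        obtain ⟨a, b⟩ := p; obtain ⟨c, d⟩ := q
        have hmp := memIs_elim (hγ _ hp)
        have hmq := memIs_elim (hγ _ hq)
        have hnp := not_fst_snd hmem hp
        have hnq := not_fst_snd hmem hq
        simp only at hnp hnq hpq
        dsimp only
        split_ifs <;>
          first
            | (exfalso; omega)
            | (exact adjN_touch (by omega) (by omega) (by omega))
            | (exact adjN_symm (adjN_touch (by omega) (by omega) (by omega)))
  refine ⟨?_, key⟩
  obtain ⟨t, htle, hind, hcard⟩ := halpha
  by_cases hs : s ≤ 3
  · exact ⟨t, htle, hind, by omega⟩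
  · have hs3 : 3 ≤ s := by omega
    refine ⟨(Multiset.range (s / 2 + 1)).map (fun i => (2 * i, 2 * i + 1)), ?_, ?_, ?_⟩
    · rw [Multiset.le_iff_subset]
      · intro x hx
        rw [Multiset.mem_map] at hx
        obtain ⟨i, hir, rfl⟩ := hx
        rw [Multiset.mem_range] at hir
        exact key hs3 _ (Or.inl ⟨2 * i, by omega, rfl⟩)
      · exact Multiset.Nodup.map
          (fun x y h => by simp only [Prod.mk.injEq] at h; omega)
          (Multiset.nodup_range _)
    · intro p hp q hq
      rw [Multiset.mem_map] at hp hq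
      obtain ⟨i, -, rfl⟩ := hp
      obtain ⟨j, -, rfl⟩ := hq
      rcases lt_trichotomy i j with h | rfl | h
      · exact not_adjN_of_lt (by omega)
      · exact not_adjN_self (by omega)
      · exact fun hA => not_adjN_of_lt (a := 2 * j) (by omega) (adjN_symm hA)
    · rw [Multiset.card_map, Multiset.card_range]
      omega
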